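/- Let (X, d) be a complete metric space, X = X_1 ∪ ... ∪ X_m (m ≥ 3) a covering by nonempty closed sets, and f : X → X an asynchronous 2-cyclic contraction with constant c ∈ [0,1): f(X_i) ⊆ X_{i+2} for all i (indices mod m) and d(f(x), f(y)) ≤ c·d(x, y) for all x ∈ X_i, y ∈ X_{i+1}. Then f has a unique fixed point x* ∈ ⋂_{i=1}^m X_i, and the Picard iteration starting from any point of X converges to x* (f is a Picard operator). -/

import Mathlib

open Filter Topology

theorem asynchronous_two_cyclic_contraction_Picard {α : Type*} [MetricSpace α] [CompleteSpace α]
    (m : ℕ) (hm : 3 ≤ m)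
    (X : ZMod m → Set α) (hne : ∀ i, (X i).Nonempty) (hcl : ∀ i, IsClosed (X i))
    (hcov : (⋃ i, X i) = Set.univ) (f : α → α)
    (hcyc : ∀ i, ∀ x ∈ X i, f x ∈ X (i + 2))
    (c : ℝ) (hc0 : 0 ≤ c) (hc1 : c < 1)
    (hcontr : ∀ i, ∀ x ∈ X i, ∀ y ∈ X (i + 1), dist (f x) (f y) ≤ c * dist x y) :
    ∃ xs : α, f xs = xs ∧ xs ∈ (⋂ i, X i) ∧ (∀ y, f y = y → y = xs) ∧
      ∀ x₀ : α, Tendsto (fun n => f^[n] x₀) atTop (𝓝 xs) := by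
  haveI : NeZero m := ⟨by omega⟩
  -- iterate membership
  have hiter_mem : ∀ (n : ℕ) (i : ZMod m) (x : α), x ∈ X i → f^[n] x ∈ X (i + 2 * n) := by
    intro n
    induction n with
    | zero => intro i x hx; simpa using hx
    | succ n ih =>
      intro i x hx
      have h1 := hcyc _ _ (ih i x hx)
      rw [Function.iterate_succ_apply']
      have : i + 2 * (n : ZMod m) + 2 = i + 2 * ((n + 1 : ℕ) : ZMod m) := by
        push_cast; ring
      rwa [this] at h1
  -- iterate contraction for consecutive pairs
  have hiter_contr : ∀ (n : ℕ) (i : ZMod m) (x : α), x ∈ X i → ∀ y ∈ X (i + 1),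
      dist (f^[n] x) (f^[n] y) ≤ c ^ n * dist x y := by
    intro n
    induction n with
    | zero => intro i x _ y _; simp
    | succ n ih =>
      intro i x hx y hy
      rw [Function.iterate_succ_apply, Function.iterate_succ_apply]
      have hfx : f x ∈ X (i + 2) := hcyc i x hx
      have hfy : f y ∈ X ((i + 2) + 1) := by
        have := hcyc (i + 1) y hy
        rwa [show i + 1 + 2 = (i + 2) + 1 by ring] at this
      calc dist (f^[n] (f x)) (f^[n] (f y)) ≤ c ^ n * dist (f x) (f y) :=
            ih (i + 2) (f x) hfx (f y) hfy
        _ ≤ c ^ n * (c * dist x y) := by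
            have := hcontr i x hx y hy
            exact mul_le_mul_of_nonneg_left this (pow_nonneg hc0 n)
        _ = c ^ (n + 1) * dist x y := by ring
  obtain ⟨x0, hx0⟩ := hne 0
  obtain ⟨z, hz⟩ := hne 1
  have hz' : z ∈ X (0 + 1) := by simpa using hz
  have hfx0 : f x0 ∈ X (1 + 1) := by
    have := hcyc 0 x0 hx0; simpa [show (0:ZMod m) + 2 = 1 + 1 by ring] using this
  -- geometric bound on consecutive orbit points
  have hbound : ∀ n : ℕ, dist (f^[n] x0) (f^[n+1] x0) ≤
      (dist x0 z + dist z (f x0)) * c ^ n := by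
    intro n
    have h1 : dist (f^[n] x0) (f^[n] z) ≤ c ^ n * dist x0 z :=
      hiter_contr n 0 x0 hx0 z hz'
    have h2 : dist (f^[n] z) (f^[n] (f x0)) ≤ c ^ n * dist z (f x0) :=
      hiter_contr n 1 z hz (f x0) hfx0
    calc dist (f^[n] x0) (f^[n+1] x0)
        ≤ dist (f^[n] x0) (f^[n] z) + dist (f^[n] z) (f^[n+1] x0) := dist_triangle _ _ _
      _ ≤ c ^ n * dist x0 z + c ^ n * dist z (f x0) := by
          rw [Function.iterate_succ_apply]; exact add_le_add h1 h2
      _ = (dist x0 z + dist z (f x0)) * c ^ n := by ring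
  have hcauchy : CauchySeq (fun n => f^[n] x0) :=
    cauchySeq_of_le_geometric c _ hc1 hbound
  obtain ⟨xs, hxs⟩ := cauchySeq_tendsto_of_complete hcauchy
  -- the z-orbit converges to xs as well
  have hpow0 : Tendsto (fun n : ℕ => c ^ n) atTop (𝓝 0) :=
    tendsto_pow_atTop_nhds_zero_of_lt_one hc0 hc1
  have hz_tend : Tendsto (fun n => f^[n] z) atTop (𝓝 xs) := by
    rw [tendsto_iff_dist_tendsto_zero]
    apply squeeze_zero (fun n => dist_nonneg)
      (g := fun n => c ^ n * dist x0 z + dist (f^[n] x0) xs)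
    · intro n
      calc dist (f^[n] z) xs ≤ dist (f^[n] z) (f^[n] x0) + dist (f^[n] x0) xs :=
            dist_triangle _ _ _
        _ ≤ c ^ n * dist x0 z + dist (f^[n] x0) xs := by
            have := hiter_contr n 0 x0 hx0 z hz'
            rw [dist_comm]; exact add_le_add_left this _
    · have h1 : Tendsto (fun n : ℕ => c ^ n * dist x0 z) atTop (𝓝 0) := by
        simpa using hpow0.mul_const (dist x0 z)
      have h2 : Tendsto (fun n => dist (f^[n] x0) xs) atTop (𝓝 0) :=
        (tendsto_iff_dist_tendsto_zero).mp hxs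
      simpa using h1.add h2
  -- xs belongs to every X j
  have hmem : ∀ j, xs ∈ X j := by
    intro j
    have hjval : ((j.val : ℕ) : ZMod m) = j := ZMod.natCast_rightInverse j
    set k := j.val with hk
    have hmono : ∀ n : ℕ, StrictMono (fun a : ℕ => n + a * m) := by
      intro n a b hab
      have h1 : a * m < b * m := by
        have hm0 : 0 < m := by omega
        exact mul_lt_mul_of_pos_right hab hm0
      show n + a * m < n + b * m
      omega
    rcases Nat.even_or_odd k with ⟨n, hn⟩ | ⟨n, hn⟩
    · -- k = n + n = 2n, use the x0-orbit
      apply (hcl j).mem_of_tendsto (hxs.comp ((hmono n).tendsto_atTop))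
      filter_upwards with a
      have h1 := hiter_mem (n + a * m) 0 x0 hx0
      have he : (0 : ZMod m) + 2 * ((n + a * m : ℕ) : ZMod m) = j := by
        rw [← hjval, hn]
        push_cast [ZMod.natCast_self]
        ring
      rwa [he] at h1
    · -- k = 2n + 1, use the z-orbit
      apply (hcl j).mem_of_tendsto (hz_tend.comp ((hmono n).tendsto_atTop))
      filter_upwards with a
      have h1 := hiter_mem (n + a * m) 1 z hz
      have he : (1 : ZMod m) + 2 * ((n + a * m : ℕ) : ZMod m) = j := by
        rw [← hjval, hn]
        push_cast [ZMod.natCast_self]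
        ring
      rwa [he] at h1
  -- fixed point
  have hfix : f xs = xs := by
    have key : ∀ n : ℕ, dist xs (f xs) ≤ dist xs (f^[n+1] x0) + c * dist (f^[n] x0) xs := by
      intro n
      have hmemn : f^[n] x0 ∈ X ((0 : ZMod m) + 2 * n) := hiter_mem n 0 x0 hx0
      have hxsmem : xs ∈ X ((0 : ZMod m) + 2 * n + 1) := hmem _
      have h2 : dist (f (f^[n] x0)) (f xs) ≤ c * dist (f^[n] x0) xs :=
        hcontr _ _ hmemn _ hxsmem
      calc dist xs (f xs) ≤ dist xs (f^[n+1] x0) + dist (f^[n+1] x0) (f xs) :=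
            dist_triangle _ _ _
        _ ≤ dist xs (f^[n+1] x0) + c * dist (f^[n] x0) xs := by
            rw [Function.iterate_succ_apply']; exact add_le_add_right h2 _
    have hlim : Tendsto (fun n : ℕ => dist xs (f^[n+1] x0) + c * dist (f^[n] x0) xs)
        atTop (𝓝 0) := by
      have h1 : Tendsto (fun n : ℕ => dist xs (f^[n+1] x0)) atTop (𝓝 0) := by
        have := ((tendsto_iff_dist_tendsto_zero).mp hxs).comp (tendsto_add_atTop_nat 1)
        simpa [dist_comm, Function.comp_def] using this
      have h2 : Tendsto (fun n : ℕ => c * dist (f^[n] x0) xs) atTop (𝓝 0) := by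
        simpa using ((tendsto_iff_dist_tendsto_zero).mp hxs).const_mul c
      simpa using h1.add h2
    have : dist xs (f xs) ≤ 0 := ge_of_tendsto' hlim key
    have := le_antisymm this dist_nonneg
    rw [dist_eq_zero] at this
    exact this.symm
  refine ⟨xs, hfix, Set.mem_iInter.mpr hmem, ?_, ?_⟩
  · intro y hy
    have : y ∈ ⋃ i, X i := by rw [hcov]; trivial
    obtain ⟨_, ⟨i, rfl⟩, hyi⟩ := this
    have h := hcontr i y hyi xs (hmem (i + 1))
    rw [hy, hfix] at h
    have : dist y xs = 0 := by nlinarith [dist_nonneg (x := y) (y := xs)]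
    exact dist_eq_zero.mp this
  · intro x₀
    have : x₀ ∈ ⋃ i, X i := by rw [hcov]; trivial
    obtain ⟨_, ⟨i, rfl⟩, hx₀⟩ := this
    rw [tendsto_iff_dist_tendsto_zero]
    apply squeeze_zero (fun n => dist_nonneg) (g := fun n => c ^ n * dist x₀ xs)
    · intro n
      have h := hiter_contr n i x₀ hx₀ xs (hmem (i + 1))
      rwa [Function.iterate_fixed hfix n] at h
    · simpa using hpow0.mul_const (dist x₀ xs)
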